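/- arXiv:1301.6635 — 3 statements merged into one kernel-verified Lean document; each statement's English description precedes it below -/
import Mathlib

section
/- Let v ∈ ℕ^n, let s ∈ ℕ^∞ be finitely supported, and let k = Σ_i s_i. Then the number of vectors u ∈ ℕ^n with u ≤ v ∧ 1 (componentwise minimum with 1), Σ_j u_j = k, and bar(v − u) = bar v ⊖ s equals (bar v choose s) = ∏_i (bar v_i choose s_i). -/
open scoped BigOperators

/-- `countVec v k` is the number of entries of `v` equal to `k + 1`; i.e. it represents the
count vector `bar v = (bar v_1, bar v_2, ...)` in 0-based indexing (index `k` ↦ value `k+1`). -/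
def countVec {n : ℕ} (v : Fin n → ℕ) (k : ℕ) : ℕ :=
  (Finset.univ.filter fun j => v j = k + 1).card

/-- Number of positions `j` with `v j = i + 1` that are decremented by `u` (i.e. `u j = 1`). -/
def tcard {n : ℕ} (v u : Fin n → ℕ) (i : ℕ) : ℕ :=
  (Finset.univ.filter fun j => v j = i + 1 ∧ u j = 1).card

lemma tcard_lemA {n : ℕ} (v u : Fin n → ℕ) (hu : ∀ j, u j ≤ min (v j) 1) (i : ℕ) :
    countVec (fun j => v j - u j) i + tcard v u i = countVec v i + tcard v u (i + 1) := by
  classical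
  have h1 : (Finset.univ.filter fun j => v j - u j = i + 1)
      = (Finset.univ.filter fun j =>
          (v j = i + 1 ∧ u j = 0) ∨ (v j = i + 1 + 1 ∧ u j = 1)) := by
    ext j
    simp only [Finset.mem_filter, Finset.mem_univ, true_and]
    have := hu j; omega
  have h2 : (Finset.univ.filter fun j => v j = i + 1)
      = (Finset.univ.filter fun j =>
          (v j = i + 1 ∧ u j = 0) ∨ (v j = i + 1 ∧ u j = 1)) := by
    ext j
    simp only [Finset.mem_filter, Finset.mem_univ, true_and]
    have := hu j; omega
  have d1 : Disjoint (Finset.univ.filter fun j : Fin n => v j = i + 1 ∧ u j = 0)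
      (Finset.univ.filter fun j : Fin n => v j = i + 1 + 1 ∧ u j = 1) := by
    rw [Finset.disjoint_left]
    intro j hj hj'
    simp only [Finset.mem_filter, Finset.mem_univ, true_and] at hj hj'
    omega
  have d2 : Disjoint (Finset.univ.filter fun j : Fin n => v j = i + 1 ∧ u j = 0)
      (Finset.univ.filter fun j : Fin n => v j = i + 1 ∧ u j = 1) := by
    rw [Finset.disjoint_left]
    intro j hj hj'
    simp only [Finset.mem_filter, Finset.mem_univ, true_and] at hj hj'
    omega
  unfold countVec tcard
  rw [h1, h2, Finset.filter_or, Finset.filter_or,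
    Finset.card_union_of_disjoint d1, Finset.card_union_of_disjoint d2]
  omega

lemma tcard_sum {n m : ℕ} (v u : Fin n → ℕ) (hu : ∀ j, u j ≤ min (v j) 1)
    (hvm : ∀ j, v j ≤ m) :
    ∑ j, u j = ∑ i ∈ Finset.range m, tcard v u i := by
  classical
  have h1 : ∑ j, u j = (Finset.univ.filter fun j => u j = 1).card := by
    rw [Finset.card_filter]
    apply Finset.sum_congr rfl
    intro j _
    have := hu j
    split <;> omega
  have h2 : (Finset.univ.filter fun j => u j = 1)
      = (Finset.range m).biUnion fun i =>
          Finset.univ.filter fun j => v j = i + 1 ∧ u j = 1 := by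
    ext j
    simp only [Finset.mem_filter, Finset.mem_univ, true_and, Finset.mem_biUnion,
      Finset.mem_range]
    constructor
    · intro hj
      have h3 := hu j
      have h4 := hvm j
      exact ⟨v j - 1, by omega, by omega, hj⟩
    · rintro ⟨i, _, _, hj⟩; exact hj
  rw [h1, h2, Finset.card_biUnion]
  · rfl
  · intro i _ i' _ hne
    rw [Function.onFun, Finset.disjoint_left]
    intro j hj hj'
    simp only [Finset.mem_filter, Finset.mem_univ, true_and] at hj hj'
    omega

/-- The number of `u ∈ ℕ^n` with `u ≤ v ∧ 1`, `Σ_j u_j = k = Σ_i s_i` and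
`bar(v - u) = bar v ⊖ s = bar v - s + Ls` equals `(bar v choose s) = ∏_i (bar v_i choose s_i)`.
Sequences in `ℕ^∞` are 0-based here: index `i` stands for position `i+1`. -/
theorem stmt5 (n : ℕ) (v : Fin n → ℕ) (s : ℕ → ℕ) (hs : {i | s i ≠ 0}.Finite)
    (k : ℕ) (hk : k = ∑ᶠ i, s i) :
    Nat.card {u : Fin n → ℕ // (∀ j, u j ≤ min (v j) 1) ∧ (∑ j, u j = k) ∧
        ∀ i, (countVec (fun j => v j - u j) i : ℤ) =
          (countVec v i : ℤ) - s i + s (i + 1)} =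
      ∏ᶠ i, (countVec v i).choose (s i) := by
  classical
  obtain ⟨m, hvm, hsm⟩ : ∃ m, (∀ j, v j ≤ m) ∧ (∀ i, m ≤ i → s i = 0) := by
    refine ⟨Finset.univ.sup v + hs.toFinset.sup id + 1, fun j => ?_, fun i hi => ?_⟩
    · have := Finset.le_sup (f := v) (Finset.mem_univ j); omega
    · by_contra h
      have h1 : i ∈ hs.toFinset := hs.mem_toFinset.mpr h
      have h2 := Finset.le_sup (f := id) h1
      simp only [id_eq] at h2
      omega
  have hcv : ∀ i, m ≤ i → countVec v i = 0 := by
    intro i hi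
    rw [countVec, Finset.card_eq_zero, Finset.filter_eq_empty_iff]
    intro j _
    have := hvm j; omega
  have hprod : ∏ᶠ i, (countVec v i).choose (s i)
      = ∏ i ∈ Finset.range m, (countVec v i).choose (s i) := by
    apply finprod_eq_prod_of_mulSupport_subset
    intro i hi
    simp only [Function.mem_mulSupport] at hi
    simp only [Finset.coe_range, Set.mem_Iio]
    by_contra h
    push_neg at h
    rw [hcv i h, hsm i h] at hi
    simp at hi
  have hksum : k = ∑ i ∈ Finset.range m, s i := by
    rw [hk]
    apply finsum_eq_sum_of_support_subset
    intro i hi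
    simp only [Function.mem_support] at hi
    simp only [Finset.coe_range, Set.mem_Iio]
    by_contra h
    push_neg at h
    exact hi (hsm i h)
  -- the key combinatorial fact: the count conditions force `tcard v u i = s i`
  have key : ∀ u : Fin n → ℕ, (∀ j, u j ≤ min (v j) 1) →
      (∀ i, (countVec (fun j => v j - u j) i : ℤ) = (countVec v i : ℤ) - s i + s (i + 1)) →
      ∀ i, tcard v u i = s i := by
    intro u hu hcount
    have hT0 : ∀ i, m ≤ i → tcard v u i = 0 := by
      intro i hi
      rw [tcard, Finset.card_eq_zero, Finset.filter_eq_empty_iff]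
      intro j _
      have := hvm j
      simp only [not_and]
      omega
    have step : ∀ i, (tcard v u i : ℤ) - s i = (tcard v u (i + 1) : ℤ) - s (i + 1) := by
      intro i
      have h1 := tcard_lemA v u hu i
      have h2 := hcount i
      omega
    have iter : ∀ d i, (tcard v u i : ℤ) - s i = (tcard v u (i + d) : ℤ) - s (i + d) := by
      intro d
      induction d with
      | zero => intro i; simp
      | succ d ih =>
        intro i
        rw [ih i, show i + (d + 1) = (i + d) + 1 from rfl]
        exact step (i + d)
    intro i
    have h3 := iter m i
    rw [hT0 (i + m) (by omega), hsm (i + m) (by omega)] at h3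
    omega
  -- identify the RHS with the cardinality of a product of powersets
  have hcard : Nat.card (∀ i : Fin m, {S : Finset (Fin n) //
        S ∈ Finset.powersetCard (s (i : ℕ)) (Finset.univ.filter fun j => v j = (i : ℕ) + 1)})
      = ∏ i ∈ Finset.range m, (countVec v i).choose (s i) := by
    rw [Nat.card_pi, ← Fin.prod_univ_eq_prod_range (fun i => (countVec v i).choose (s i)) m]
    apply Finset.prod_congr rfl
    intro i _
    rw [Nat.card_eq_finsetCard, Finset.card_powersetCard]
    rfl
  rw [hprod, ← hcard]
  apply Nat.card_congr
  have hmem : ∀ (u : {u : Fin n → ℕ // (∀ j, u j ≤ min (v j) 1) ∧ (∑ j, u j = k) ∧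
        ∀ i, (countVec (fun j => v j - u j) i : ℤ) =
          (countVec v i : ℤ) - s i + s (i + 1)}) (i : Fin m),
      (Finset.univ.filter fun j => v j = (i : ℕ) + 1 ∧ u.1 j = 1)
        ∈ Finset.powersetCard (s (i : ℕ)) (Finset.univ.filter fun j => v j = (i : ℕ) + 1) := by
    rintro ⟨u, hu1, _, hu3⟩ i
    rw [Finset.mem_powersetCard]
    constructor
    · intro j hj
      simp only [Finset.mem_filter, Finset.mem_univ, true_and] at hj ⊢
      exact hj.1
    · exact key u hu1 hu3 (i : ℕ)
  apply Equiv.ofBijective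
    (fun u i => ⟨Finset.univ.filter fun j => v j = (i : ℕ) + 1 ∧ u.1 j = 1, hmem u i⟩)
  constructor
  · -- injective
    intro u u' h
    apply Subtype.ext
    funext j
    by_cases hv : v j = 0
    · have h1 := u.2.1 j
      have h2 := u'.2.1 j
      rw [hv] at h1 h2
      omega
    · have hjm : v j - 1 < m := by have := hvm j; omega
      have h3 := congrArg Subtype.val (congrFun h ⟨v j - 1, hjm⟩)
      rw [Finset.ext_iff] at h3
      have h4 := h3 j
      simp only [Finset.mem_filter, Finset.mem_univ, true_and] at h4
      have h5 := u.2.1 j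
      have h6 := u'.2.1 j
      by_cases hu : u.1 j = 1
      · have := h4.mp ⟨by omega, hu⟩
        omega
      · by_cases hu' : u'.1 j = 1
        · have := h4.mpr ⟨by omega, hu'⟩
          omega
        · omega
  · -- surjective
    intro F
    set G : ℕ → Finset (Fin n) := fun i => if h : i < m then (F ⟨i, h⟩).1 else ∅ with hG_def
    have hGF : ∀ i : Fin m, G (i : ℕ) = (F i).1 := by
      intro i
      rw [hG_def]
      simp only [dif_pos i.isLt, Fin.eta]
    set u : Fin n → ℕ := fun j => if v j ≠ 0 ∧ j ∈ G (v j - 1) then 1 else 0 with hu_def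
    have hFsub : ∀ i : Fin m, (F i).1 ⊆ Finset.univ.filter fun j => v j = (i : ℕ) + 1 := by
      intro i
      exact (Finset.mem_powersetCard.mp (F i).2).1
    have hFcard : ∀ i : Fin m, (F i).1.card = s (i : ℕ) := by
      intro i
      exact (Finset.mem_powersetCard.mp (F i).2).2
    have hfilter : ∀ i : Fin m,
        (Finset.univ.filter fun j => v j = (i : ℕ) + 1 ∧ u j = 1) = (F i).1 := by
      intro i
      ext j
      simp only [Finset.mem_filter, Finset.mem_univ, true_and]
      constructor
      · rintro ⟨hv, hu1⟩
        rw [hu_def] at hu1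
        simp only at hu1
        by_cases hj : v j ≠ 0 ∧ j ∈ G (v j - 1)
        · obtain ⟨-, hj2⟩ := hj
          rw [show v j - 1 = (i : ℕ) from by omega, hGF i] at hj2
          exact hj2
        · rw [if_neg hj] at hu1
          exact absurd hu1 (by omega)
      · intro hj
        have hv : v j = (i : ℕ) + 1 := by
          have := hFsub i hj
          simp only [Finset.mem_filter, Finset.mem_univ, true_and] at this
          exact this
        refine ⟨hv, ?_⟩
        rw [hu_def]
        simp only
        rw [if_pos]
        refine ⟨by omega, ?_⟩
        rw [show v j - 1 = (i : ℕ) from by omega, hGF i]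
        exact hj
    have hu1 : ∀ j, u j ≤ min (v j) 1 := by
      intro j
      rw [hu_def]
      simp only
      split
      · next hc => omega
      · omega
    have hT : ∀ i : ℕ, tcard v u i = s i := by
      intro i
      by_cases hi : i < m
      · rw [tcard, hfilter ⟨i, hi⟩, hFcard ⟨i, hi⟩]
      · push_neg at hi
        rw [hsm i hi, tcard, Finset.card_eq_zero, Finset.filter_eq_empty_iff]
        intro j _
        have := hvm j
        simp only [not_and]
        omega
    have hu3 : ∀ i, (countVec (fun j => v j - u j) i : ℤ) =
        (countVec v i : ℤ) - s i + s (i + 1) := by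
      intro i
      have h1 := tcard_lemA v u hu1 i
      have h2 := hT i
      have h3 := hT (i + 1)
      omega
    have hu2 : ∑ j, u j = k := by
      rw [tcard_sum v u hu1 hvm, hksum]
      exact Finset.sum_congr rfl fun i _ => hT i
    refine ⟨⟨u, hu1, hu2, hu3⟩, ?_⟩
    funext i
    exact Subtype.ext (hfilter i)
end

section
/- Let v ∈ ℕ^n, let s ∈ ℕ^∞ be finitely supported, and let k = Σ_i s_i. Then the number of vectors u ∈ ℕ^n with u ≤ v (componentwise), Σ_j u_j = k, and bar(v − u) = bar v ⊖ s equals (bar v + Ls choose s) = ∏_i ((bar v_i + s_{i+1}) choose s_i). -/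
open scoped BigOperators

open Finset

lemma countVec_zero_of_bound {n : ℕ} {w : Fin n → ℕ} {M i : ℕ}
    (hw : ∀ j, w j ≤ M) (hi : M ≤ i) : countVec w i = 0 := by
  simp only [countVec, Finset.card_eq_zero, Finset.filter_eq_empty_iff]
  intro j _
  have := hw j
  omega

def Pred (n : ℕ) (v : Fin n → ℕ) (s : ℕ → ℕ) (w : Fin n → ℕ) : Prop :=
  (∀ j, w j ≤ v j) ∧ ∀ i, (countVec w i : ℤ) = (countVec v i : ℤ) - s i + s (i + 1)

def vNext {n : ℕ} (v : Fin n → ℕ) (M : ℕ) (T : Finset (Fin n)) : Fin n → ℕ :=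
  fun j => if j ∈ T then 0 else min (v j) M

def sNext (s : ℕ → ℕ) (M : ℕ) : ℕ → ℕ := fun i => if i < M then s i else 0

lemma natcard_sigma {ι : Type*} [Fintype ι] {f : ι → Type*} [∀ i, Finite (f i)] :
    Nat.card (Σ i, f i) = ∑ i, Nat.card (f i) := by
  letI := fun i => Fintype.ofFinite (f i)
  simp [Nat.card_eq_fintype_card]

lemma finite_pred {n : ℕ} (v : Fin n → ℕ) (s : ℕ → ℕ) : Finite {w // Pred n v s w} := by
  apply Finite.of_injective
    (fun (x : {w // Pred n v s w}) =>
      (fun j => (⟨min (x.1 j) (v j), Nat.lt_succ_of_le (min_le_right _ _)⟩ : Fin (v j + 1))))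
  intro x y hxy
  apply Subtype.ext; funext j
  have h1 : min (x.1 j) (v j) = min (y.1 j) (v j) := congrArg Fin.val (congrFun hxy j)
  have hx := x.2.1 j
  have hy := y.2.1 j
  omega

lemma key {n : ℕ} (M : ℕ) : ∀ (v : Fin n → ℕ) (s : ℕ → ℕ),
    (∀ j, v j ≤ M) → (∀ i, M ≤ i → s i = 0) →
    Nat.card {w // Pred n v s w} =
      ∏ i ∈ Finset.range M, (countVec v i + s (i + 1)).choose (s i) := by
  induction M with
  | zero =>
    intro v s hv hs
    rw [Finset.range_zero, Finset.prod_empty]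
    haveI : Nonempty {w // Pred n v s w} := by
      refine ⟨⟨fun _ => 0, fun j => Nat.zero_le _, fun i => ?_⟩⟩
      rw [countVec_zero_of_bound (fun j => le_refl 0) (Nat.zero_le i),
        countVec_zero_of_bound hv (Nat.zero_le i), hs i (Nat.zero_le i),
        hs (i + 1) (Nat.zero_le _)]
      simp
    haveI : Subsingleton {w // Pred n v s w} := by
      refine ⟨fun x y => Subtype.ext (funext fun j => ?_)⟩
      have hx := x.2.1 j; have hy := y.2.1 j; have := hv j; omega
    exact Nat.card_unique
  | succ M ih =>
    intro v s hv hs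
    classical
    have hsM1 : s (M + 1) = 0 := hs _ (le_refl _)
    by_cases hle : s M ≤ countVec v M
    case neg =>
      haveI : IsEmpty {w // Pred n v s w} := by
        refine ⟨fun x => ?_⟩
        have h := x.2.2 M
        rw [hsM1] at h
        have h0 : (0 : ℤ) ≤ (countVec x.1 M : ℤ) := Int.ofNat_nonneg _
        omega
      rw [Nat.card_of_isEmpty]
      symm
      apply Finset.prod_eq_zero (Finset.self_mem_range_succ M)
      rw [hsM1, add_zero]
      exact Nat.choose_eq_zero_of_lt (by omega)
    case pos =>
      set cM := countVec v M with hcM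
      set t := cM - s M with ht
      set V := Finset.univ.filter (fun j => v j = M + 1) with hV
      have hVcard : V.card = cM := rfl
      -- count vector of vNext
      have hcv' : ∀ T : Finset (Fin n), T ⊆ V → T.card = t → ∀ i, i < M →
          countVec (vNext v M T) i = countVec v i + (if i + 1 = M then s M else 0) := by
        intro T hTV hTc i hi
        rcases Nat.lt_or_ge (i + 1) M with hiM | hiM
        · have hfe : (Finset.univ.filter fun j => vNext v M T j = i + 1)
              = Finset.univ.filter fun j => v j = i + 1 := by
            apply Finset.filter_congr
            intro j _
            by_cases hj : j ∈ T
            · have hvj : v j = M + 1 := (Finset.mem_filter.mp (hTV hj)).2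
              simp only [vNext, if_pos hj]
              omega
            · have := hv j
              simp only [vNext, if_neg hj]
              omega
          rw [countVec, hfe, if_neg (by omega)]
          rfl
        · have hiM' : i + 1 = M := by omega
          have hfe : (Finset.univ.filter fun j => vNext v M T j = i + 1)
              = (Finset.univ.filter fun j => v j = i + 1) ∪ (V \ T) := by
            ext j
            rw [Finset.mem_filter]
            simp only [Finset.mem_filter, Finset.mem_union, Finset.mem_sdiff, Finset.mem_univ,
              true_and, hV, vNext]
            by_cases hj : j ∈ T
            · have hvj : v j = M + 1 := (Finset.mem_filter.mp (hTV hj)).2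
              simp only [if_pos hj, hj, not_true_eq_false, and_false, or_false, ite_true]
              omega
            · have := hv j
              simp only [if_neg hj, hj, not_false_eq_true, and_true, ite_false]
              omega
          have hdisj : Disjoint (Finset.univ.filter fun j => v j = i + 1) (V \ T) := by
            rw [Finset.disjoint_left]
            intro j hj1 hj2
            have h1 : v j = i + 1 := (Finset.mem_filter.mp hj1).2
            have h2 : v j = M + 1 := (Finset.mem_filter.mp (Finset.mem_sdiff.mp hj2).1).2
            omega
          rw [countVec, hfe, Finset.card_union_of_disjoint hdisj, Finset.card_sdiff_of_subset hTV,
            hVcard, hTc, if_pos hiM']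
          have : (Finset.univ.filter fun j => v j = i + 1).card = countVec v i := rfl
          rw [this]
          omega
      have hv'le : ∀ T : Finset (Fin n), ∀ j, vNext v M T j ≤ M := by
        intro T j
        unfold vNext
        split <;> omega
      have hs'0 : ∀ i, M ≤ i → sNext s M i = 0 := by
        intro i hi
        unfold sNext
        rw [if_neg (by omega)]
      haveI : Finite {w // Pred n v s w} := finite_pred v s
      -- the fiber map
      have hmem : ∀ x : {w // Pred n v s w},
          (Finset.univ.filter fun j => x.1 j = M + 1) ∈ Finset.powersetCard t V := by
        intro x
        rw [Finset.mem_powersetCard]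
        constructor
        · intro j hj
          have h1 : x.1 j = M + 1 := (Finset.mem_filter.mp hj).2
          have h2 := x.2.1 j
          have h3 := hv j
          rw [hV, Finset.mem_filter]
          exact ⟨Finset.mem_univ _, by omega⟩
        · have h := x.2.2 M
          rw [hsM1] at h
          have h2 : (Finset.univ.filter fun j => x.1 j = M + 1).card = countVec x.1 M := rfl
          rw [h2]
          omega
      -- each fiber has the same cardinality
      have key_fiber : ∀ T ∈ Finset.powersetCard t V,
          Nat.card {x : {w // Pred n v s w} //
              (Finset.univ.filter fun j => x.1 j = M + 1) = T}
            = ∏ i ∈ Finset.range M, (countVec v i + s (i + 1)).choose (s i) := by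
        intro T hT
        obtain ⟨hTV, hTc⟩ := Finset.mem_powersetCard.mp hT
        have hvT : ∀ j ∈ T, v j = M + 1 := fun j hj => (Finset.mem_filter.mp (hTV hj)).2
        have hcvT := hcv' T hTV hTc
        -- forward transport
        have fwd : ∀ w : Fin n → ℕ, Pred n v s w →
            (Finset.univ.filter fun j => w j = M + 1) = T →
            Pred n (vNext v M T) (sNext s M) (fun j => if j ∈ T then 0 else w j) := by
          intro w hw hPhi
          obtain ⟨hw1, hw2⟩ := hw
          have hwMT : ∀ j, j ∈ T ↔ w j = M + 1 := by
            intro j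
            rw [← hPhi, Finset.mem_filter]
            simp
          have hwle : ∀ j, j ∉ T → w j ≤ M := by
            intro j hj
            have h1 := hw1 j
            have h2 := hv j
            have h3 : w j ≠ M + 1 := fun h => hj ((hwMT j).mpr h)
            omega
          constructor
          · intro j
            by_cases hj : j ∈ T
            · simp [vNext, hj]
            · simp only [vNext, if_neg hj]
              exact le_min (hw1 j) (hwle j hj)
          · intro i
            rcases Nat.lt_or_ge i M with hi | hi
            · have hcc : countVec (fun j => if j ∈ T then 0 else w j) i = countVec w i := by
                unfold countVec
                congr 1
                apply Finset.filter_congr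
                intro j _
                by_cases hj : j ∈ T
                · have := (hwMT j).mp hj
                  simp only [if_pos hj]
                  omega
                · simp only [if_neg hj]
              rw [hcc, hw2 i, hcvT i hi]
              unfold sNext
              by_cases hiM : i + 1 = M
              · rw [if_pos hiM, if_pos hi, if_neg (by omega), ← hiM]
                push_cast
                ring
              · rw [if_neg hiM, if_pos hi, if_pos (by omega)]
                push_cast
                ring
            · rw [countVec_zero_of_bound (w := fun j => if j ∈ T then 0 else w j)
                  (fun j => by by_cases hj : j ∈ T <;> simp [hj, hwle j]) hi,
                countVec_zero_of_bound (hv'le T) hi, hs'0 i hi, hs'0 _ (by omega)]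
              simp
        -- backward transport
        have bwd : ∀ w' : Fin n → ℕ, Pred n (vNext v M T) (sNext s M) w' →
            Pred n v s (fun j => if j ∈ T then M + 1 else w' j) ∧
            (Finset.univ.filter fun j => (if j ∈ T then M + 1 else w' j) = M + 1) = T := by
          intro w' hw'
          obtain ⟨hw'1, hw'2⟩ := hw'
          have hw'le : ∀ j, w' j ≤ M := fun j => le_trans (hw'1 j) (hv'le T j)
          have hwble : ∀ j, (if j ∈ T then M + 1 else w' j) ≤ M + 1 := by
            intro j
            by_cases hj : j ∈ T <;> simp [hj]
            exact le_trans (hw'le j) (Nat.le_succ M)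
          have hPhi : (Finset.univ.filter
              fun j => (if j ∈ T then M + 1 else w' j) = M + 1) = T := by
            ext j
            simp only [Finset.mem_filter, Finset.mem_univ, true_and]
            by_cases hj : j ∈ T
            · simp [hj]
            · have := hw'le j
              rw [if_neg hj]
              simp only [hj, iff_false]
              omega
          refine ⟨⟨?_, ?_⟩, hPhi⟩
          · intro j
            show (if j ∈ T then M + 1 else w' j) ≤ v j
            by_cases hj : j ∈ T
            · rw [if_pos hj, hvT j hj]
            · rw [if_neg hj]
              refine le_trans (hw'1 j) ?_
              simp only [vNext, if_neg hj]
              exact min_le_left _ _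
          · intro i
            rcases Nat.lt_trichotomy i M with hi | hi | hi
            · have hcc : countVec (fun j => if j ∈ T then M + 1 else w' j) i
                  = countVec w' i := by
                unfold countVec
                congr 1
                apply Finset.filter_congr
                intro j _
                by_cases hj : j ∈ T
                · have := hw'le j  -- unused? need w' j at j ∈ T?  both sides false
                  have h0 := hw'1 j
                  simp only [vNext, if_pos hj] at h0
                  simp only [if_pos hj]
                  omega
                · simp only [if_neg hj]
              rw [hcc, hw'2 i, hcvT i hi]
              unfold sNext
              by_cases hiM : i + 1 = M
              · rw [if_pos hiM, if_pos hi, if_neg (by omega), ← hiM]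
                push_cast
                ring
              · rw [if_neg hiM, if_pos hi, if_pos (by omega)]
                push_cast
                ring
            · have hcc : countVec (fun j => if j ∈ T then M + 1 else w' j) M = T.card := by
                have h2 : (Finset.univ.filter
                    fun j => (if j ∈ T then M + 1 else w' j) = M + 1).card = T.card :=
                  congrArg Finset.card hPhi
                exact h2
              rw [hi, hcc, hTc, hsM1]
              omega
            · rw [countVec_zero_of_bound hwble hi, countVec_zero_of_bound hv hi,
                hs i (by omega), hs (i + 1) (by omega)]
              simp
        -- the equivalence
        have e : {x : {w // Pred n v s w} //
              (Finset.univ.filter fun j => x.1 j = M + 1) = T}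
            ≃ {w' // Pred n (vNext v M T) (sNext s M) w'} :=
          { toFun := fun x => ⟨fun j => if j ∈ T then 0 else x.1.1 j, fwd x.1.1 x.1.2 x.2⟩
            invFun := fun y => ⟨⟨fun j => if j ∈ T then M + 1 else y.1 j, (bwd y.1 y.2).1⟩,
              (bwd y.1 y.2).2⟩
            left_inv := by
              intro x
              apply Subtype.ext
              apply Subtype.ext
              funext j
              simp only
              by_cases hj : j ∈ T
              · rw [if_pos hj]
                have : j ∈ Finset.univ.filter fun j => x.1.1 j = M + 1 := by
                  rw [x.2]; exact hj
                exact ((Finset.mem_filter.mp this).2).symm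
              · rw [if_neg hj, if_neg hj]
            right_inv := by
              intro y
              apply Subtype.ext
              funext j
              simp only
              by_cases hj : j ∈ T
              · rw [if_pos hj]
                have h0 := y.2.1 j
                have h1 : vNext v M T j = 0 := by
                  show (if j ∈ T then 0 else min (v j) M) = 0
                  rw [if_pos hj]
                rw [h1, Nat.le_zero] at h0
                exact h0.symm
              · rw [if_neg hj, if_neg hj] }
        rw [Nat.card_congr e, ih (vNext v M T) (sNext s M) (hv'le T) hs'0]
        apply Finset.prod_congr rfl
        intro i hi
        rw [Finset.mem_range] at hi
        rw [hcvT i hi]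
        unfold sNext
        by_cases hiM : i + 1 = M
        · rw [if_pos hiM, if_pos hi, if_neg (by omega), ← hiM, add_zero]
        · rw [if_neg hiM, if_pos hi, if_pos (by omega), add_zero]
      -- assemble
      have hfib := Equiv.sigmaFiberEquiv
        (fun x : {w // Pred n v s w} => Finset.univ.filter fun j => x.1 j = M + 1)
      rw [← Nat.card_congr hfib, natcard_sigma]
      have hzero : ∀ T : Finset (Fin n), T ∉ Finset.powersetCard t V →
          Nat.card {x : {w // Pred n v s w} //
            (Finset.univ.filter fun j => x.1 j = M + 1) = T} = 0 := by
        intro T hT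
        haveI : IsEmpty {x : {w // Pred n v s w} //
            (Finset.univ.filter fun j => x.1 j = M + 1) = T} :=
          ⟨fun x => hT (x.2 ▸ hmem x.1)⟩
        exact Nat.card_of_isEmpty
      rw [← Finset.sum_subset (Finset.subset_univ (Finset.powersetCard t V))
        (fun T _ hT => hzero T hT)]
      rw [Finset.sum_congr rfl key_fiber, Finset.sum_const, Finset.card_powersetCard,
        hVcard, ht, Nat.choose_symm hle, smul_eq_mul, Finset.prod_range_succ, hsM1,
        add_zero, mul_comm]


lemma sum_eq_sum_countVec {n : ℕ} {M : ℕ} (w : Fin n → ℕ) (hw : ∀ j, w j ≤ M) :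
    ∑ j, w j = ∑ i ∈ Finset.range M, (i + 1) * countVec w i := by
  have hterm : ∀ j, w j = ∑ i ∈ Finset.range M, if w j = i + 1 then i + 1 else 0 := by
    intro j
    cases h : w j with
    | zero => simp
    | succ t =>
      have ht : t < M := by have := hw j; omega
      rw [Finset.sum_congr rfl (g := fun i => if t = i then i + 1 else 0)
        (fun i _ => by simp [h, Nat.succ_inj, eq_comm])]
      simp [Finset.sum_ite_eq, ht]
  calc ∑ j, w j = ∑ j, ∑ i ∈ Finset.range M, if w j = i + 1 then i + 1 else 0 :=
        Finset.sum_congr rfl fun j _ => hterm j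
    _ = ∑ i ∈ Finset.range M, ∑ j, if w j = i + 1 then i + 1 else 0 := Finset.sum_comm
    _ = ∑ i ∈ Finset.range M, (i + 1) * countVec w i := by
        refine Finset.sum_congr rfl fun i _ => ?_
        rw [countVec, Finset.sum_ite, Finset.sum_const, Finset.sum_const_zero,
          add_zero, smul_eq_mul, mul_comm]

/-- The number of `u ∈ ℕ^n` with `u ≤ v`, `Σ_j u_j = k = Σ_i s_i` and
`bar(v - u) = bar v ⊖ s = bar v - s + Ls` equals
`(bar v + Ls choose s) = ∏_i ((bar v_i + s_{i+1}) choose s_i)`.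
Sequences in `ℕ^∞` are 0-based here: index `i` stands for position `i+1`. -/
theorem stmt6 (n : ℕ) (v : Fin n → ℕ) (s : ℕ → ℕ) (hs : {i | s i ≠ 0}.Finite)
    (k : ℕ) (hk : k = ∑ᶠ i, s i) :
    Nat.card {u : Fin n → ℕ // (∀ j, u j ≤ v j) ∧ (∑ j, u j = k) ∧
        ∀ i, (countVec (fun j => v j - u j) i : ℤ) =
          (countVec v i : ℤ) - s i + s (i + 1)} =
      ∏ᶠ i, (countVec v i + s (i + 1)).choose (s i) := by
  classical
  obtain ⟨M, hvM, hsM⟩ : ∃ M, (∀ j, v j ≤ M) ∧ (∀ i, M ≤ i → s i = 0) := by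
    refine ⟨max (Finset.univ.sup v) (hs.toFinset.sup id + 1),
      fun j => le_max_of_le_left (Finset.le_sup (Finset.mem_univ j)), fun i hi => ?_⟩
    by_contra h
    have h1 : i ∈ hs.toFinset := hs.mem_toFinset.mpr h
    have h2 : i ≤ hs.toFinset.sup id := Finset.le_sup (f := id) h1
    have h3 := le_max_right (Finset.univ.sup v) (hs.toFinset.sup id + 1)
    omega
  have hk' : k = ∑ i ∈ Finset.range M, s i := by
    rw [hk]
    apply finsum_eq_sum_of_support_subset
    intro i hi
    simp only [Finset.coe_range, Set.mem_Iio]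
    by_contra h
    exact hi (hsM i (by omega))
  have hprod : ∏ᶠ i, (countVec v i + s (i + 1)).choose (s i)
      = ∏ i ∈ Finset.range M, (countVec v i + s (i + 1)).choose (s i) := by
    apply finprod_eq_prod_of_mulSupport_subset
    intro i hi
    simp only [Finset.coe_range, Set.mem_Iio]
    by_contra h
    apply hi
    show (countVec v i + s (i + 1)).choose (s i) = 1
    rw [hsM i (by omega), Nat.choose_zero_right]
  -- sum condition is implied
  have hsum : ∀ w : Fin n → ℕ, Pred n v s w → ∑ j, (v j - w j) = k := by
    intro w hw
    have hwle : ∀ j, w j ≤ M := fun j => le_trans (hw.1 j) (hvM j)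
    have hw1 := hw.1
    have hshift : ∑ i ∈ Finset.range M, ((i : ℤ) + 1) * (s (i + 1) : ℤ)
        = ∑ i ∈ Finset.range M, (i : ℤ) * s i := by
      have h3 := Finset.sum_range_succ' (fun i => (i : ℤ) * s i) M
      rw [Finset.sum_range_succ] at h3
      rw [hsM M (le_refl M)] at h3
      push_cast at h3 ⊢
      linarith [h3]
    have htel : ∀ c : ℕ → ℕ,
        ∑ i ∈ Finset.range M, ((i : ℤ) + 1) * ((c i : ℤ) - s i + s (i + 1))
          = (∑ i ∈ Finset.range M, ((i : ℤ) + 1) * c i) - ∑ i ∈ Finset.range M, (s i : ℤ) := by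
      intro c
      have expand : ∀ i : ℕ, ((i : ℤ) + 1) * ((c i : ℤ) - s i + s (i + 1))
          = ((i : ℤ) + 1) * c i - (((i : ℤ) + 1) * s i - (i : ℤ) * s i)
            + (((i : ℤ) + 1) * s (i + 1) - (i : ℤ) * s i) := by
        intro i; ring
      have hBC : (∑ x ∈ Finset.range M, ((x : ℤ) + 1) * s x)
          - ∑ x ∈ Finset.range M, (x : ℤ) * s x = ∑ x ∈ Finset.range M, (s x : ℤ) := by
        rw [← Finset.sum_sub_distrib]
        exact Finset.sum_congr rfl fun i _ => by ring
      rw [Finset.sum_congr rfl fun i _ => expand i]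
      simp only [Finset.sum_add_distrib, Finset.sum_sub_distrib]
      rw [hshift, hBC]
      ring
    have hcast : ∀ x : Fin n → ℕ, (∀ j, x j ≤ M) →
        (∑ j, (x j : ℤ)) = ∑ i ∈ Finset.range M, ((i : ℤ) + 1) * countVec x i := by
      intro x hx
      have h := sum_eq_sum_countVec x hx
      have h2 : ((∑ j, x j : ℕ) : ℤ) = ((∑ i ∈ Finset.range M, (i + 1) * countVec x i : ℕ) : ℤ) :=
        congrArg _ h
      push_cast at h2
      exact h2
    have hw2 : (∑ j, (w j : ℤ)) = (∑ j, (v j : ℤ)) - ∑ i ∈ Finset.range M, (s i : ℤ) := by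
      rw [hcast w hwle, hcast v hvM,
        Finset.sum_congr rfl fun i _ => by rw [hw.2 i], htel]
    have hfin : ((∑ j, (v j - w j) : ℕ) : ℤ) = (k : ℤ) := by
      push_cast [hk']
      rw [Finset.sum_congr rfl fun j (_ : j ∈ Finset.univ) =>
        (Nat.cast_sub (hw1 j) : ((v j - w j : ℕ) : ℤ) = (v j : ℤ) - w j)]
      rw [Finset.sum_sub_distrib, hw2]
      ring
    exact_mod_cast hfin
  have hsub : ∀ w : Fin n → ℕ, Pred n v s w → (fun j => v j - (v j - w j)) = w := by
    intro w hw; funext j; exact Nat.sub_sub_self (hw.1 j)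
  rw [hprod, ← key M v s hvM hsM]
  apply Nat.card_congr
  exact
    { toFun := fun x => ⟨fun j => v j - x.1 j, fun j => Nat.sub_le _ _, x.2.2.2⟩
      invFun := fun y => ⟨fun j => v j - y.1 j, fun j => Nat.sub_le _ _, hsum y.1 y.2,
        fun i => by rw [hsub y.1 y.2]; exact y.2.2 i⟩
      left_inv := fun x => Subtype.ext (funext fun j => Nat.sub_sub_self (x.2.1 j))
      right_inv := fun y => Subtype.ext (funext fun j => Nat.sub_sub_self (y.2.1 j)) }
end

section
/- Let v ∈ ℕ^n, let n_0 = #{j : v_j > 0} be the number of nonzero entries of v, and let s ∈ ℕ^∞ be finitely supported with s ≤ bar v + Ls componentwise. Then for every i ≥ 1, bar v_i + s_{i+1} ≤ Σ_{j=i}^∞ bar v_j ≤ n_0. -/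
open scoped BigOperators

lemma countVec_zero_of_big {n : ℕ} (v : Fin n → ℕ) {i : ℕ}
    (h : (∑ j, v j) ≤ i) : countVec v i = 0 := by
  rw [countVec, Finset.card_eq_zero, Finset.filter_eq_empty_iff]
  intro j _ hj
  have : v j ≤ ∑ j, v j := Finset.single_le_sum (fun _ _ => Nat.zero_le _) (Finset.mem_univ j)
  omega

lemma finsum_tail {n : ℕ} (v : Fin n → ℕ) (k : ℕ) :
    (∑ᶠ i : ℕ, if k ≤ i then countVec v i else 0)
      = (Finset.univ.filter fun j => k + 1 ≤ v j).card := by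
  set M := ∑ j, v j with hM
  have h1 : (∑ᶠ i : ℕ, if k ≤ i then countVec v i else 0)
      = ∑ i ∈ Finset.Ico k M, countVec v i := by
    rw [finsum_eq_sum_of_support_subset _ (s := Finset.Ico k M)]
    · apply Finset.sum_congr rfl
      intro i hi
      rw [if_pos (Finset.mem_Ico.mp hi).1]
    · intro i hi
      simp only [Function.mem_support] at hi
      by_cases hk : k ≤ i
      · rw [if_pos hk] at hi
        simp only [Finset.coe_Ico, Set.mem_Ico]
        refine ⟨hk, ?_⟩
        by_contra h
        exact hi (countVec_zero_of_big v (by omega))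
      · rw [if_neg hk] at hi; exact absurd rfl hi
  rw [h1]
  rw [Finset.card_eq_sum_card_fiberwise (f := fun j => v j - 1)
    (t := Finset.Ico k M) (fun j hj => ?_)]
  · apply Finset.sum_congr rfl
    intro i hi
    rw [Finset.filter_filter, countVec]
    congr 1
    apply Finset.filter_congr
    intro j _
    simp only [Finset.mem_Ico] at hi
    omega
  · simp only [Finset.mem_coe, Finset.mem_filter] at hj
    simp only [Finset.mem_coe, Finset.mem_Ico]
    have : v j ≤ M := Finset.single_le_sum (fun _ _ => Nat.zero_le _) (Finset.mem_univ j)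
    omega

lemma split_card {n : ℕ} (v : Fin n → ℕ) (k : ℕ) :
    (Finset.univ.filter fun j => k + 1 ≤ v j).card
      = countVec v k + (Finset.univ.filter fun j => k + 2 ≤ v j).card := by
  have h := Finset.card_filter_add_card_filter_not
    (s := Finset.univ.filter fun j => k + 1 ≤ v j) (p := fun j => v j = k + 1)
  rw [Finset.filter_filter, Finset.filter_filter] at h
  have e1 : (Finset.univ.filter fun j => k + 1 ≤ v j ∧ v j = k + 1)
      = Finset.univ.filter fun j => v j = k + 1 :=
    Finset.filter_congr (fun j _ => by omega)
  have e2 : (Finset.univ.filter fun j => k + 1 ≤ v j ∧ ¬ v j = k + 1)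
      = Finset.univ.filter fun j => k + 2 ≤ v j :=
    Finset.filter_congr (fun j _ => by omega)
  rw [e1, e2] at h
  rw [countVec]
  omega

/-- If `n_0 = #{j : v_j > 0}` and `s ∈ ℕ^∞` is finitely supported with `s ≤ bar v + Ls`,
then for every `i ≥ 1`, `bar v_i + s_{i+1} ≤ Σ_{j=i}^∞ bar v_j ≤ n_0`.
Sequences in `ℕ^∞` are 0-based here: index `k` stands for position `k+1`. -/
theorem stmt15 (n : ℕ) (v : Fin n → ℕ)
    (n0 : ℕ) (hn0 : n0 = (Finset.univ.filter fun j => 0 < v j).card)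
    (s : ℕ → ℕ) (hfin : {k | s k ≠ 0}.Finite)
    (hs : ∀ k, s k ≤ countVec v k + s (k + 1)) :
    ∀ k : ℕ,
      countVec v k + s (k + 1) ≤ (∑ᶠ i : ℕ, if k ≤ i then countVec v i else 0) ∧
      (∑ᶠ i : ℕ, if k ≤ i then countVec v i else 0) ≤ n0 := by
  obtain ⟨N, hN⟩ := hfin.bddAbove
  have hN' : ∀ k, N < k → s k = 0 := by
    intro k hk
    by_contra h
    exact absurd (hN h) (by omega)
  -- s k ≤ number of j with v j ≥ k+1
  have key : ∀ d k, N < k + d → s k ≤ (Finset.univ.filter fun j => k + 1 ≤ v j).card := by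
    intro d
    induction d with
    | zero => intro k hk; rw [hN' k (by omega)]; exact Nat.zero_le _
    | succ d ih =>
      intro k hk
      rcases Nat.lt_or_ge N k with h | h
      · rw [hN' k h]; exact Nat.zero_le _
      · have h2 := ih (k + 1) (by omega)
        have h3 : (Finset.univ.filter fun j => k + 1 ≤ v j).card
            = countVec v k + (Finset.univ.filter fun j => k + 2 ≤ v j).card :=
          split_card v k
        calc s k ≤ countVec v k + s (k + 1) := hs k
          _ ≤ countVec v k + (Finset.univ.filter fun j => k + 2 ≤ v j).card :=
              Nat.add_le_add_left h2 _
          _ = (Finset.univ.filter fun j => k + 1 ≤ v j).card := h3.symm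
  intro k
  rw [finsum_tail]
  constructor
  · have h2 := key (N + 1) (k + 1) (by omega)
    have h3 : (Finset.univ.filter fun j => k + 1 ≤ v j).card
        = countVec v k + (Finset.univ.filter fun j => k + 2 ≤ v j).card :=
      split_card v k
    rw [h3]
    exact Nat.add_le_add_left h2 _
  · rw [hn0]
    apply Finset.card_le_card
    apply Finset.monotone_filter_right
    intro j hj
    omega
end
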